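/- Let {a_n}_{n≥1} be a nonnegative real sequence which is a mean value bounded variation sequence (MVBVS). If lim_{n→∞} n·a_n = 0, then the sine series ∑_{n=1}^∞ a_n sin(nx) converges uniformly on ℝ, i.e., its partial sums S_n(x) = ∑_{k=1}^n a_k sin(kx) converge uniformly to the sum function f, so that lim_{n→∞} sup_x |f(x) − S_n(x)| = 0. -/

import Mathlib

open Filter

section Helpers

open Finset

/-- telescoping sum over `Icc`. -/
private lemma tele (F : ℕ → ℝ) (p : ℕ) : ∀ q, p ≤ q →
    ∑ k ∈ Icc p q, (F k - F (k + 1)) = F p - F (q + 1) := by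
  intro q
  induction q with
  | zero => intro hp; interval_cases p; simp
  | succ q ih =>
    intro hp
    rcases Nat.lt_or_ge p (q + 1) with h | h
    · rw [Finset.sum_Icc_succ_top hp, ih (Nat.lt_succ_iff.mp h)]; ring
    · have hpq : p = q + 1 := le_antisymm hp h
      subst hpq
      simp

/-- Dirichlet-type kernel bound on `(0, π]`. -/
private lemma dker_bound {x : ℝ} (hx0 : 0 < x) (hxpi : x ≤ Real.pi) (p q : ℕ) :
    |∑ k ∈ Icc p q, Real.sin (k * x)| ≤ Real.pi / x := by
  have hpi := Real.pi_pos
  have hs : x / Real.pi ≤ Real.sin (x / 2) := by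
    have h2 := Real.mul_le_sin (x := x / 2) (by positivity) (by linarith)
    calc x / Real.pi = 2 / Real.pi * (x / 2) := by ring
      _ ≤ _ := h2
  have hs0 : 0 < Real.sin (x / 2) := lt_of_lt_of_le (by positivity) hs
  rcases le_or_gt p q with hpq | hpq
  · have step : ∀ k ∈ Icc p q, Real.sin ((k : ℕ) * x) * (2 * Real.sin (x / 2))
        = (fun j : ℕ => Real.cos ((j : ℝ) * x - x / 2)) k
          - (fun j : ℕ => Real.cos ((j : ℝ) * x - x / 2)) (k + 1) := by
      intro k _
      simp only []
      have hcc := Real.cos_sub_cos ((k : ℝ) * x - x / 2) ((k : ℝ) * x + x / 2)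
      have e1 : (((k : ℝ) * x - x / 2) + ((k : ℝ) * x + x / 2)) / 2 = (k : ℝ) * x := by ring
      have e2 : (((k : ℝ) * x - x / 2) - ((k : ℝ) * x + x / 2)) / 2 = -(x / 2) := by ring
      rw [e1, e2, Real.sin_neg] at hcc
      have e3 : ((k : ℝ) + 1) * x - x / 2 = (k : ℝ) * x + x / 2 := by ring
      push_cast
      rw [e3, hcc]
      ring
    have key : (∑ k ∈ Icc p q, Real.sin (k * x)) * (2 * Real.sin (x / 2))
        = Real.cos ((p : ℝ) * x - x / 2) - Real.cos (((q : ℝ) + 1) * x - x / 2) := by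
      rw [Finset.sum_mul, Finset.sum_congr rfl step,
        tele (fun j : ℕ => Real.cos ((j : ℝ) * x - x / 2)) p q hpq]
      push_cast
      ring
    have hb : |∑ k ∈ Icc p q, Real.sin (k * x)| * (2 * Real.sin (x / 2)) ≤ 2 := by
      have h5 : |(∑ k ∈ Icc p q, Real.sin (k * x)) * (2 * Real.sin (x / 2))| ≤ 2 := by
        rw [key]
        have h1 := Real.neg_one_le_cos ((p : ℝ) * x - x / 2)
        have h2 := Real.cos_le_one ((p : ℝ) * x - x / 2)
        have h3 := Real.neg_one_le_cos (((q : ℝ) + 1) * x - x / 2)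
        have h4 := Real.cos_le_one (((q : ℝ) + 1) * x - x / 2)
        rw [abs_le]
        constructor <;> linarith
      rw [abs_mul, abs_of_pos (show (0:ℝ) < 2 * Real.sin (x / 2) by positivity)] at h5
      exact h5
    have h1 : |∑ k ∈ Icc p q, Real.sin (k * x)| ≤ 1 / Real.sin (x / 2) := by
      rw [le_div_iff₀ hs0]
      nlinarith
    refine h1.trans ?_
    rw [div_le_div_iff₀ hs0 hx0]
    rw [div_le_iff₀ hpi] at hs
    nlinarith
  · rw [Finset.Icc_eq_empty (by omega)]
    simp
    positivity

/-- Abel summation over `Icc`. -/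
private lemma abel_sum (a s : ℕ → ℝ) (p : ℕ) : ∀ n,
    ∑ k ∈ Icc p n, a k * s k
      = (∑ k ∈ Icc p n, (a k - a (k + 1)) * (∑ j ∈ Icc p k, s j))
        + a (n + 1) * ∑ j ∈ Icc p n, s j := by
  intro n
  induction n with
  | zero =>
    rcases Nat.eq_zero_or_pos p with rfl | hp
    · simp; ring
    · rw [Finset.Icc_eq_empty (by omega)]; simp
  | succ n ih =>
    rcases le_or_gt p (n + 1) with h | h
    · simp only [Finset.sum_Icc_succ_top h]
      rw [ih]
      ring
    · rw [Finset.Icc_eq_empty (by omega)]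
      simp

private lemma abel_bound (a s : ℕ → ℝ) (p n : ℕ) (B : ℝ)
    (hB : ∀ k, |∑ j ∈ Icc p k, s j| ≤ B) :
    |∑ k ∈ Icc p n, a k * s k|
      ≤ B * ((∑ k ∈ Icc p n, |a k - a (k + 1)|) + |a (n + 1)|) := by
  rw [abel_sum a s p n]
  calc |(∑ k ∈ Icc p n, (a k - a (k + 1)) * (∑ j ∈ Icc p k, s j))
          + a (n + 1) * ∑ j ∈ Icc p n, s j|
      ≤ |∑ k ∈ Icc p n, (a k - a (k + 1)) * (∑ j ∈ Icc p k, s j)|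
          + |a (n + 1) * ∑ j ∈ Icc p n, s j| := abs_add_le _ _
    _ ≤ (∑ k ∈ Icc p n, |a k - a (k + 1)| * B) + |a (n + 1)| * B := by
        gcongr
        · calc |∑ k ∈ Icc p n, (a k - a (k + 1)) * (∑ j ∈ Icc p k, s j)|
              ≤ ∑ k ∈ Icc p n, |(a k - a (k + 1)) * (∑ j ∈ Icc p k, s j)| :=
                Finset.abs_sum_le_sum_abs _ _
            _ ≤ ∑ k ∈ Icc p n, |a k - a (k + 1)| * B := by
                apply Finset.sum_le_sum
                intro k _
                rw [abs_mul]
                exact mul_le_mul_of_nonneg_left (hB k) (abs_nonneg _)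
        · rw [abs_mul]
          exact mul_le_mul_of_nonneg_left (hB n) (abs_nonneg _)
    _ = B * ((∑ k ∈ Icc p n, |a k - a (k + 1)|) + |a (n + 1)|) := by
        rw [← Finset.sum_mul]; ring

/-- Tail variation estimate for MVBV sequences with `n aₙ → 0`. -/
private lemma var_tail (a : ℕ → ℝ) (ha : ∀ n : ℕ, 1 ≤ n → 0 ≤ a n)
    (lam C : ℝ) (hlam : 2 ≤ lam) (hC : 0 < C)
    (hM : ∀ n : ℕ, 1 ≤ n →
      ∑ k ∈ Icc n (2 * n), |a k - a (k + 1)| ≤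
        (C / n) * ∑ k ∈ Icc ⌊(n : ℝ) / lam⌋₊ ⌊lam * n⌋₊, a k)
    (hlim : Tendsto (fun n : ℕ => (n : ℝ) * a n) atTop (nhds 0))
    {ε : ℝ} (hε : 0 < ε) :
    ∃ N : ℕ, 1 ≤ N ∧ (∀ k : ℕ, N ≤ k → (k : ℝ) * a k ≤ ε) ∧
      ∀ p : ℕ, N ≤ p → ∀ M : ℕ,
        ∑ k ∈ Icc p M, |a k - a (k + 1)| ≤ 2 * (4 * C * lam ^ 2) * ε / p := by
  have hlam0 : (0 : ℝ) < lam := by linarith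
  obtain ⟨N₀, hN₀⟩ := (Metric.tendsto_atTop.mp hlim) ε hε
  have hsmall : ∀ k : ℕ, N₀ ≤ k → (k : ℝ) * a k ≤ ε := by
    intro k hk
    have := hN₀ k hk
    rw [Real.dist_eq, sub_zero] at this
    exact le_of_lt (lt_of_le_of_lt (le_abs_self _) this)
  set N : ℕ := max 1 ⌈lam * ((N₀ : ℝ) + 2)⌉₊ with hNdef
  have hN1 : 1 ≤ N := le_max_left _ _
  have hNreal : ∀ n : ℕ, N ≤ n → lam * ((N₀ : ℝ) + 2) ≤ (n : ℝ) := by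
    intro n hn
    have h1 : ⌈lam * ((N₀ : ℝ) + 2)⌉₊ ≤ n := le_trans (le_max_right _ _) hn
    exact (Nat.ceil_le).mp h1
  have hNN₀ : ∀ k : ℕ, N ≤ k → N₀ ≤ k := by
    intro k hk
    have h1 : (N₀ : ℝ) ≤ lam * ((N₀ : ℝ) + 2) := by nlinarith [Nat.cast_nonneg (α := ℝ) N₀]
    have h2 := le_trans h1 (hNreal k hk)
    exact_mod_cast h2
  -- the basic block estimate
  have block : ∀ n : ℕ, N ≤ n →
      ∑ k ∈ Icc n (2 * n), |a k - a (k + 1)| ≤ 4 * C * lam ^ 2 * ε / n := by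
    intro n hn
    have h1n : 1 ≤ n := le_trans hN1 hn
    have hnR : lam * ((N₀ : ℝ) + 2) ≤ (n : ℝ) := hNreal n hn
    have hn0R : (0 : ℝ) < n := by exact_mod_cast h1n
    set b : ℕ := ⌊(n : ℝ) / lam⌋₊ with hbdef
    have hbgt : (n : ℝ) / lam - 1 < b := Nat.sub_one_lt_floor _
    have hdivlarge : (N₀ : ℝ) + 2 ≤ (n : ℝ) / lam := by
      rw [le_div_iff₀ hlam0]; nlinarith
    have hblow : (n : ℝ) / (2 * lam) ≤ (b : ℝ) := by
      have h2lam : 2 * lam ≤ (n : ℝ) := by nlinarith [Nat.cast_nonneg (α := ℝ) N₀]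
      have hq : 1 ≤ (n : ℝ) / (2 * lam) := by
        rw [le_div_iff₀ (by positivity)]; linarith
      have he : (n : ℝ) / lam = 2 * ((n : ℝ) / (2 * lam)) := by
        field_simp
      linarith
    have hbN : N₀ ≤ b := by
      have h1 : (N₀ : ℝ) < (b : ℝ) := by linarith
      exact_mod_cast le_of_lt h1
    have hb1 : 1 ≤ b := by
      have h1 : (1 : ℝ) ≤ (b : ℝ) := by
        have := Nat.cast_nonneg (α := ℝ) N₀
        linarith
      exact_mod_cast h1
    have hb0R : (0 : ℝ) < (b : ℝ) := by
      have h1 : (1 : ℝ) ≤ (b : ℝ) := by exact_mod_cast hb1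
      linarith
    have hterm : ∀ k ∈ Icc b ⌊lam * (n : ℝ)⌋₊, a k ≤ ε / b := by
      intro k hk
      obtain ⟨hk1, hk2⟩ := Finset.mem_Icc.mp hk
      have hk1' : 1 ≤ k := le_trans hb1 hk1
      have hak : (k : ℝ) * a k ≤ ε := hsmall k (le_trans hbN hk1)
      have ha0 := ha k hk1'
      have hbk : (b : ℝ) ≤ (k : ℝ) := by exact_mod_cast hk1
      rw [le_div_iff₀ hb0R]
      calc a k * (b : ℝ) ≤ a k * (k : ℝ) := by gcongr
        _ = (k : ℝ) * a k := by ring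
        _ ≤ ε := hak
    have hsum : ∑ k ∈ Icc b ⌊lam * (n : ℝ)⌋₊, a k
        ≤ ((Icc b ⌊lam * (n : ℝ)⌋₊).card : ℝ) * (ε / b) := by
      have := Finset.sum_le_card_nsmul _ _ _ hterm
      rwa [nsmul_eq_mul] at this
    have hcard : (((Icc b ⌊lam * (n : ℝ)⌋₊).card : ℕ) : ℝ) ≤ 2 * lam * (n : ℝ) := by
      rw [Nat.card_Icc]
      have h1 : (⌊lam * (n : ℝ)⌋₊ : ℝ) ≤ lam * (n : ℝ) := Nat.floor_le (by positivity)
      have h2 : ((⌊lam * (n : ℝ)⌋₊ + 1 - b : ℕ) : ℝ) ≤ (⌊lam * (n : ℝ)⌋₊ : ℝ) + 1 := by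
        have h3 := Nat.cast_le (α := ℝ).mpr (Nat.sub_le (⌊lam * (n : ℝ)⌋₊ + 1) b)
        push_cast at h3 ⊢
        linarith
      have h3 : 1 ≤ lam * (n : ℝ) := by nlinarith
      linarith
    have hRHS : ∑ k ∈ Icc b ⌊lam * (n : ℝ)⌋₊, a k ≤ 4 * lam ^ 2 * ε := by
      have hεb : ε / (b : ℝ) ≤ 2 * lam * ε / (n : ℝ) := by
        rw [div_le_div_iff₀ hb0R hn0R]
        have h5 : 2 * lam * ((n : ℝ) / (2 * lam)) = (n : ℝ) := by field_simp
        nlinarith [mul_le_mul_of_nonneg_left hblow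
          (show (0:ℝ) ≤ ε * (2 * lam) by positivity)]
      have hcard0 : (0 : ℝ) ≤ ((Icc b ⌊lam * (n : ℝ)⌋₊).card : ℝ) := Nat.cast_nonneg _
      calc ∑ k ∈ Icc b ⌊lam * (n : ℝ)⌋₊, a k
          ≤ ((Icc b ⌊lam * (n : ℝ)⌋₊).card : ℝ) * (ε / b) := hsum
        _ ≤ (2 * lam * (n : ℝ)) * (2 * lam * ε / (n : ℝ)) := by
            apply mul_le_mul hcard hεb (by positivity) (by positivity)
        _ = 4 * lam ^ 2 * ε := by field_simp; ring
    calc ∑ k ∈ Icc n (2 * n), |a k - a (k + 1)|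
        ≤ (C / n) * ∑ k ∈ Icc ⌊(n : ℝ) / lam⌋₊ ⌊lam * (n : ℝ)⌋₊, a k := hM n h1n
      _ ≤ (C / n) * (4 * lam ^ 2 * ε) := by
          apply mul_le_mul_of_nonneg_left hRHS (by positivity)
      _ = 4 * C * lam ^ 2 * ε / n := by ring
  -- dyadic extension
  set C' : ℝ := 4 * C * lam ^ 2 with hC'def
  have hC'pos : 0 < C' := by positivity
  have hdy : ∀ p : ℕ, N ≤ p → ∀ j : ℕ,
      ∑ k ∈ Icc p (2 ^ (j + 1) * p - 1), |a k - a (k + 1)|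
        ≤ (2 - (1 / 2 : ℝ) ^ j) * (C' * ε / p) := by
    intro p hp j
    have h1p : 1 ≤ p := le_trans hN1 hp
    have hp0R : (0 : ℝ) < (p : ℝ) := by exact_mod_cast h1p
    induction j with
    | zero =>
      have hsub : Icc p (2 ^ 1 * p - 1) ⊆ Icc p (2 * p) :=
        Finset.Icc_subset_Icc le_rfl (by omega)
      calc ∑ k ∈ Icc p (2 ^ 1 * p - 1), |a k - a (k + 1)|
          ≤ ∑ k ∈ Icc p (2 * p), |a k - a (k + 1)| :=
            Finset.sum_le_sum_of_subset_of_nonneg hsub (fun i _ _ => abs_nonneg _)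
        _ ≤ C' * ε / p := by rw [hC'def]; exact block p hp
        _ = (2 - (1 / 2 : ℝ) ^ 0) * (C' * ε / p) := by norm_num
    | succ j ih =>
      have hsub : Icc p (2 ^ (j + 2) * p - 1)
          ⊆ Icc p (2 ^ (j + 1) * p - 1) ∪ Icc (2 ^ (j + 1) * p) (2 ^ (j + 2) * p - 1) := by
        intro k hk
        simp only [Finset.mem_Icc, Finset.mem_union] at *
        omega
      have hnonneg2 : (0 : ℝ) ≤ ∑ k ∈ (Icc p (2 ^ (j + 1) * p - 1) ∩
          Icc (2 ^ (j + 1) * p) (2 ^ (j + 2) * p - 1)), |a k - a (k + 1)| :=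
        Finset.sum_nonneg fun i _ => abs_nonneg _
      have hui := Finset.sum_union_inter (s₁ := Icc p (2 ^ (j + 1) * p - 1))
        (s₂ := Icc (2 ^ (j + 1) * p) (2 ^ (j + 2) * p - 1)) (f := fun k => |a k - a (k + 1)|)
      have hblock2 : ∑ k ∈ Icc (2 ^ (j + 1) * p) (2 ^ (j + 2) * p - 1), |a k - a (k + 1)|
          ≤ (1 / 2 : ℝ) ^ (j + 1) * (C' * ε / p) := by
        have hNle : N ≤ 2 ^ (j + 1) * p := le_trans hp (Nat.le_mul_of_pos_left p (by positivity))
        have hsub2 : Icc (2 ^ (j + 1) * p) (2 ^ (j + 2) * p - 1)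
            ⊆ Icc (2 ^ (j + 1) * p) (2 * (2 ^ (j + 1) * p)) :=
          Finset.Icc_subset_Icc le_rfl (by ring_nf; omega)
        calc ∑ k ∈ Icc (2 ^ (j + 1) * p) (2 ^ (j + 2) * p - 1), |a k - a (k + 1)|
            ≤ ∑ k ∈ Icc (2 ^ (j + 1) * p) (2 * (2 ^ (j + 1) * p)), |a k - a (k + 1)| :=
              Finset.sum_le_sum_of_subset_of_nonneg hsub2 (fun i _ _ => abs_nonneg _)
          _ ≤ 4 * C * lam ^ 2 * ε / (2 ^ (j + 1) * p : ℕ) := block _ hNle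
          _ = (1 / 2 : ℝ) ^ (j + 1) * (C' * ε / p) := by
              rw [hC'def]
              have hp0 : (p : ℝ) ≠ 0 := ne_of_gt hp0R
              have h2j : ((2 : ℝ)) ^ (j + 1) ≠ 0 := by positivity
              push_cast
              field_simp
              rw [← mul_pow]; norm_num
      calc ∑ k ∈ Icc p (2 ^ (j + 2) * p - 1), |a k - a (k + 1)|
          ≤ ∑ k ∈ (Icc p (2 ^ (j + 1) * p - 1) ∪
              Icc (2 ^ (j + 1) * p) (2 ^ (j + 2) * p - 1)), |a k - a (k + 1)| :=
            Finset.sum_le_sum_of_subset_of_nonneg hsub (fun i _ _ => abs_nonneg _)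
        _ ≤ (∑ k ∈ Icc p (2 ^ (j + 1) * p - 1), |a k - a (k + 1)|)
            + ∑ k ∈ Icc (2 ^ (j + 1) * p) (2 ^ (j + 2) * p - 1), |a k - a (k + 1)| := by
            linarith [hui]
        _ ≤ (2 - (1 / 2 : ℝ) ^ j) * (C' * ε / p) + (1 / 2 : ℝ) ^ (j + 1) * (C' * ε / p) := by
            exact add_le_add ih hblock2
        _ ≤ (2 - (1 / 2 : ℝ) ^ (j + 1)) * (C' * ε / p) := by
            have h1 : (1 / 2 : ℝ) ^ j = 2 * (1 / 2 : ℝ) ^ (j + 1) := by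
              rw [pow_succ]; ring
            have h2 : (0 : ℝ) ≤ C' * ε / p := by positivity
            nlinarith [pow_nonneg (by norm_num : (0:ℝ) ≤ 1/2) (j + 1)]
  refine ⟨N, hN1, fun k hk => hsmall k (hNN₀ k hk), ?_⟩
  intro p hp M
  have h1p : 1 ≤ p := le_trans hN1 hp
  have hp0R : (0 : ℝ) < (p : ℝ) := by exact_mod_cast h1p
  have hsub : Icc p M ⊆ Icc p (2 ^ (M + 1) * p - 1) := by
    apply Finset.Icc_subset_Icc le_rfl
    have := Nat.lt_two_pow_self (n := M)
    have h2 : 2 ^ M ≤ 2 ^ (M + 1) * p := by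
      calc 2 ^ M ≤ 2 ^ (M + 1) := Nat.pow_le_pow_right (by norm_num) (by omega)
        _ ≤ 2 ^ (M + 1) * p := Nat.le_mul_of_pos_right _ (by omega)
    omega
  calc ∑ k ∈ Icc p M, |a k - a (k + 1)|
      ≤ ∑ k ∈ Icc p (2 ^ (M + 1) * p - 1), |a k - a (k + 1)| :=
        Finset.sum_le_sum_of_subset_of_nonneg hsub (fun i _ _ => abs_nonneg _)
    _ ≤ (2 - (1 / 2 : ℝ) ^ M) * (C' * ε / p) := hdy p hp M
    _ ≤ 2 * (C' * ε / p) := by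
        have h2 : (0 : ℝ) ≤ C' * ε / p := by positivity
        nlinarith [pow_nonneg (by norm_num : (0:ℝ) ≤ 1/2) M]
    _ = 2 * (4 * C * lam ^ 2) * ε / p := by rw [hC'def]; ring

end Helpers


/-- A nonnegative sequence (indexed from 1) is a mean value bounded variation sequence. -/
def IsMVBVS (a : ℕ → ℝ) : Prop :=
  ∃ lam : ℝ, 2 ≤ lam ∧ ∃ C : ℝ, 0 < C ∧ ∀ n : ℕ, 1 ≤ n →
    ∑ k ∈ Finset.Icc n (2 * n), |a k - a (k + 1)| ≤
      (C / n) * ∑ k ∈ Finset.Icc ⌊(n : ℝ) / lam⌋₊ ⌊lam * n⌋₊, a k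

/-- If a nonnegative MVBV sequence satisfies `n·aₙ → 0`, then its sine series
converges uniformly on ℝ to its sum function `f`. -/
theorem stmt7 (a : ℕ → ℝ) (ha : ∀ n : ℕ, 1 ≤ n → 0 ≤ a n)
    (hMVBV : IsMVBVS a)
    (hlim : Tendsto (fun n : ℕ => (n : ℝ) * a n) atTop (nhds 0)) :
    ∃ f : ℝ → ℝ,
      TendstoUniformly
        (fun (n : ℕ) (x : ℝ) => ∑ k ∈ Finset.Icc 1 n, a k * Real.sin (k * x))
        f atTop := by
  classical
  obtain ⟨lam, hlam, C, hC, hM⟩ := hMVBV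
  have hπ := Real.pi_pos
  have hlam0 : (0 : ℝ) < lam := by linarith
  set C' : ℝ := 4 * C * lam ^ 2 with hC'def
  have hC'pos : 0 < C' := by positivity
  set K : ℝ := 1 + Real.pi * (2 * C' + 1) with hKdef
  have hKpos : 0 < K := by positivity
  have main : ∀ ε : ℝ, 0 < ε → ∃ N : ℕ, 1 ≤ N ∧ ∀ m n : ℕ, N ≤ m → m ≤ n → ∀ x : ℝ,
      |(∑ k ∈ Finset.Icc 1 n, a k * Real.sin (k * x))
        - ∑ k ∈ Finset.Icc 1 m, a k * Real.sin (k * x)| ≤ K * ε := by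
    intro ε hε
    obtain ⟨N, hN1, hsmall, hvar⟩ := var_tail a ha lam C hlam hC hM hlim hε
    refine ⟨N, hN1, ?_⟩
    have hkey : ∀ m n : ℕ, N ≤ m → m ≤ n → ∀ x : ℝ, 0 < x → x ≤ Real.pi →
        |(∑ k ∈ Finset.Icc 1 n, a k * Real.sin (k * x))
          - ∑ k ∈ Finset.Icc 1 m, a k * Real.sin (k * x)| ≤ K * ε := by
      intro m n hm hmn x hx0 hxpi
      have hIccIoc : ∀ j : ℕ, Finset.Icc 1 j = Finset.Ioc 0 j := by
        intro j; ext k; simp only [Finset.mem_Icc, Finset.mem_Ioc]; omega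
      have hdiff : (∑ k ∈ Finset.Icc 1 n, a k * Real.sin (k * x))
          - ∑ k ∈ Finset.Icc 1 m, a k * Real.sin (k * x)
          = ∑ k ∈ Finset.Ioc m n, a k * Real.sin (k * x) := by
        rw [hIccIoc n, hIccIoc m,
          ← Finset.sum_Ioc_consecutive (fun k => a k * Real.sin (k * x)) (Nat.zero_le m) hmn]
        ring
      set ν : ℕ := ⌊1 / x⌋₊ with hν
      set q : ℕ := min n (m + ν) with hq
      have hmq : m ≤ q := le_min hmn (Nat.le_add_right m ν)
      have hqn : q ≤ n := min_le_left _ _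
      have hsplit := Finset.sum_Ioc_consecutive (fun k => a k * Real.sin (k * x)) hmq hqn
      have hper : ∀ k ∈ Finset.Ioc m q, |a k * Real.sin (k * x)| ≤ ε * x := by
        intro k hk
        obtain ⟨hk1, hk2⟩ := Finset.mem_Ioc.mp hk
        have hkN : N ≤ k := le_trans hm (le_of_lt hk1)
        have hk1' : 1 ≤ k := le_trans hN1 hkN
        have ha0 := ha k hk1'
        have hsin : |Real.sin ((k : ℝ) * x)| ≤ (k : ℝ) * x := by
          calc |Real.sin ((k : ℝ) * x)| ≤ |(k : ℝ) * x| := Real.abs_sin_le_abs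
            _ = (k : ℝ) * x := abs_of_nonneg (by positivity)
        calc |a k * Real.sin ((k : ℝ) * x)| = a k * |Real.sin ((k : ℝ) * x)| := by
              rw [abs_mul, abs_of_nonneg ha0]
          _ ≤ a k * ((k : ℝ) * x) := mul_le_mul_of_nonneg_left hsin ha0
          _ = ((k : ℝ) * a k) * x := by ring
          _ ≤ ε * x := mul_le_mul_of_nonneg_right (hsmall k hkN) (le_of_lt hx0)
      have hpart1 : |∑ k ∈ Finset.Ioc m q, a k * Real.sin (k * x)| ≤ ε := by
        have hcard : (((Finset.Ioc m q).card : ℕ) : ℝ) ≤ (ν : ℝ) := by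
          have h1 : (Finset.Ioc m q).card ≤ ν := by rw [Nat.card_Ioc]; omega
          exact_mod_cast h1
        have hνx : (ν : ℝ) * x ≤ 1 := by
          have h1 : (ν : ℝ) ≤ 1 / x := by rw [hν]; exact Nat.floor_le (by positivity)
          calc (ν : ℝ) * x ≤ (1 / x) * x := mul_le_mul_of_nonneg_right h1 (le_of_lt hx0)
            _ = 1 := by field_simp
        have hb := Finset.sum_le_card_nsmul (Finset.Ioc m q) _ (ε * x) hper
        rw [nsmul_eq_mul] at hb
        calc |∑ k ∈ Finset.Ioc m q, a k * Real.sin (k * x)|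
            ≤ ∑ k ∈ Finset.Ioc m q, |a k * Real.sin (k * x)| :=
              Finset.abs_sum_le_sum_abs _ _
          _ ≤ (((Finset.Ioc m q).card : ℕ) : ℝ) * (ε * x) := hb
          _ ≤ (ν : ℝ) * (ε * x) := mul_le_mul_of_nonneg_right hcard (by positivity)
          _ = ((ν : ℝ) * x) * ε := by ring
          _ ≤ 1 * ε := mul_le_mul_of_nonneg_right hνx (le_of_lt hε)
          _ = ε := one_mul ε
      have hpart2 : |∑ k ∈ Finset.Ioc q n, a k * Real.sin (k * x)|
          ≤ Real.pi * (2 * C' + 1) * ε := by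
        rcases le_or_gt n (m + ν) with h | h
        · have hqe : q = n := by rw [hq]; exact min_eq_left h
          rw [hqe, Finset.Ioc_self, Finset.sum_empty, abs_zero]
          positivity
        · have hqe : q = m + ν := by rw [hq]; exact min_eq_right (le_of_lt h)
          have hIoc : Finset.Ioc q n = Finset.Icc (m + ν + 1) n := by
            rw [hqe, Finset.Icc_add_one_left_eq_Ioc]
          set p : ℕ := m + ν + 1 with hp
          have hNp : N ≤ p := le_trans hm (by omega)
          have hp0R : (0 : ℝ) < (p : ℝ) := by
            have h1 : (0 : ℕ) < p := by omega
            exact_mod_cast h1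
          have hpx : 1 / x ≤ (p : ℝ) := by
            have h1 : 1 / x < (ν : ℝ) + 1 := by rw [hν]; exact Nat.lt_floor_add_one _
            have h2 : (ν : ℝ) + 1 ≤ (p : ℝ) := by
              have : ν + 1 ≤ p := by omega
              exact_mod_cast this
            linarith
          have hπx : Real.pi / x ≤ Real.pi * (p : ℝ) := by
            rw [div_le_iff₀ hx0]
            have hpx1 : 1 ≤ (p : ℝ) * x := by
              rw [div_le_iff₀ hx0] at hpx
              linarith
            nlinarith
          have hvarb := hvar p hNp n
          have han1 : |a (n + 1)| ≤ ε / (p : ℝ) := by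
            have hNn1 : N ≤ n + 1 := le_trans hm (by omega)
            have hsm := hsmall (n + 1) hNn1
            have ha0 := ha (n + 1) (by omega)
            have hpn : (p : ℝ) ≤ ((n + 1 : ℕ) : ℝ) := by
              have : p ≤ n + 1 := by omega
              exact_mod_cast this
            rw [abs_of_nonneg ha0, le_div_iff₀ hp0R]
            calc a (n + 1) * (p : ℝ) ≤ a (n + 1) * ((n + 1 : ℕ) : ℝ) :=
                mul_le_mul_of_nonneg_left hpn ha0
              _ = ((n + 1 : ℕ) : ℝ) * a (n + 1) := by ring
              _ ≤ ε := hsm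
          have habel := abel_bound a (fun k => Real.sin (k * x)) p n (Real.pi / x)
            (fun k => dker_bound hx0 hxpi p k)
          rw [hIoc]
          have hπx0 : (0 : ℝ) ≤ Real.pi / x := by positivity
          calc |∑ k ∈ Finset.Icc p n, a k * Real.sin (k * x)|
              ≤ (Real.pi / x) * ((∑ k ∈ Finset.Icc p n, |a k - a (k + 1)|) + |a (n + 1)|) :=
                habel
            _ ≤ (Real.pi / x) * (2 * (4 * C * lam ^ 2) * ε / p + ε / p) := by
                apply mul_le_mul_of_nonneg_left (add_le_add hvarb han1) hπx0
            _ ≤ (Real.pi * (p : ℝ)) * (2 * (4 * C * lam ^ 2) * ε / p + ε / p) := by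
                apply mul_le_mul_of_nonneg_right hπx
                positivity
            _ = Real.pi * (2 * C' + 1) * ε := by
                rw [hC'def]
                field_simp
      rw [hdiff, ← hsplit]
      calc |(∑ k ∈ Finset.Ioc m q, a k * Real.sin (k * x))
              + ∑ k ∈ Finset.Ioc q n, a k * Real.sin (k * x)|
          ≤ |∑ k ∈ Finset.Ioc m q, a k * Real.sin (k * x)|
              + |∑ k ∈ Finset.Ioc q n, a k * Real.sin (k * x)| := abs_add_le _ _
        _ ≤ ε + Real.pi * (2 * C' + 1) * ε := add_le_add hpart1 hpart2
        _ = K * ε := by rw [hKdef]; ring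
    -- extension to all real x
    intro m n hm hmn x
    set t : ℤ := ⌊x / (2 * Real.pi)⌋ with ht
    set y : ℝ := x - 2 * Real.pi * t with hy
    have h2π : (0 : ℝ) < 2 * Real.pi := by positivity
    have hfl : 2 * Real.pi * ((t : ℝ)) ≤ x ∧ x < 2 * Real.pi * ((t : ℝ) + 1) := by
      constructor
      · have h1 : (t : ℝ) ≤ x / (2 * Real.pi) := Int.floor_le _
        calc 2 * Real.pi * (t : ℝ) ≤ 2 * Real.pi * (x / (2 * Real.pi)) :=
            mul_le_mul_of_nonneg_left h1 (le_of_lt h2π)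
          _ = x := by field_simp
      · have h1 : x / (2 * Real.pi) < (t : ℝ) + 1 := Int.lt_floor_add_one _
        have h2 : 2 * Real.pi * (x / (2 * Real.pi)) = x := by field_simp
        nlinarith
    have hy0 : 0 ≤ y := by rw [hy]; linarith [hfl.1]
    have hy2 : y < 2 * Real.pi := by rw [hy]; linarith [hfl.2]
    have hsinxy : ∀ k : ℕ, Real.sin (k * x) = Real.sin (k * y) := by
      intro k
      have h3 : (k : ℝ) * x = (k : ℝ) * y + (((k : ℤ) * t : ℤ) : ℝ) * (2 * Real.pi) := by
        rw [hy]; push_cast; ring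
      rw [h3, Real.sin_add_int_mul_two_pi]
    have hgxy : ∀ j : ℕ, (∑ k ∈ Finset.Icc 1 j, a k * Real.sin (k * x))
        = ∑ k ∈ Finset.Icc 1 j, a k * Real.sin (k * y) :=
      fun j => Finset.sum_congr rfl (fun k _ => by rw [hsinxy k])
    rw [hgxy n, hgxy m]
    rcases eq_or_lt_of_le hy0 with h0 | h0
    · have hz : ∀ j : ℕ, (∑ k ∈ Finset.Icc 1 j, a k * Real.sin (k * y)) = 0 := by
        intro j
        apply Finset.sum_eq_zero
        intro k _
        rw [← h0, mul_zero, Real.sin_zero, mul_zero]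
      rw [hz n, hz m, sub_zero, abs_zero]
      positivity
    · rcases le_or_gt y Real.pi with h1 | h1
      · exact hkey m n hm hmn y h0 h1
      · set z : ℝ := 2 * Real.pi - y with hzdef
        have hz0 : 0 < z := by rw [hzdef]; linarith
        have hzpi : z ≤ Real.pi := by rw [hzdef]; linarith
        have hsinz : ∀ k : ℕ, Real.sin (k * y) = -Real.sin (k * z) := by
          intro k
          have h3 : (k : ℝ) * y = -((k : ℝ) * z) + (((k : ℕ) : ℤ) : ℝ) * (2 * Real.pi) := by
            rw [hzdef]; push_cast; ring
          rw [h3, Real.sin_add_int_mul_two_pi, Real.sin_neg]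
        have hgz : ∀ j : ℕ, (∑ k ∈ Finset.Icc 1 j, a k * Real.sin (k * y))
            = -∑ k ∈ Finset.Icc 1 j, a k * Real.sin (k * z) := by
          intro j
          rw [← Finset.sum_neg_distrib]
          exact Finset.sum_congr rfl (fun k _ => by rw [hsinz k]; ring)
        rw [hgz n, hgz m]
        have hkz := hkey m n hm hmn z hz0 hzpi
        calc |(-∑ k ∈ Finset.Icc 1 n, a k * Real.sin (k * z))
                - -∑ k ∈ Finset.Icc 1 m, a k * Real.sin (k * z)|
            = |(∑ k ∈ Finset.Icc 1 n, a k * Real.sin (k * z))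
                - ∑ k ∈ Finset.Icc 1 m, a k * Real.sin (k * z)| := by
              rw [show (-∑ k ∈ Finset.Icc 1 n, a k * Real.sin (k * z))
                  - -∑ k ∈ Finset.Icc 1 m, a k * Real.sin (k * z)
                  = -((∑ k ∈ Finset.Icc 1 n, a k * Real.sin (k * z))
                    - ∑ k ∈ Finset.Icc 1 m, a k * Real.sin (k * z)) by ring, abs_neg]
          _ ≤ K * ε := hkz
  -- uniform Cauchy property
  have hcauchy : ∀ δ : ℝ, 0 < δ → ∃ N : ℕ, ∀ m n : ℕ, N ≤ m → N ≤ n → ∀ x : ℝ,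
      dist (∑ k ∈ Finset.Icc 1 m, a k * Real.sin (k * x))
        (∑ k ∈ Finset.Icc 1 n, a k * Real.sin (k * x)) < δ := by
    intro δ hδ
    obtain ⟨N, _, hmain⟩ := main (δ / (2 * K)) (by positivity)
    have hKδ : K * (δ / (2 * K)) = δ / 2 := by field_simp
    refine ⟨N, fun m n hm hn x => ?_⟩
    rw [Real.dist_eq]
    rcases le_total m n with h | h
    · have h2 := hmain m n hm h x
      rw [abs_sub_comm]
      calc |(∑ k ∈ Finset.Icc 1 n, a k * Real.sin (k * x))
              - ∑ k ∈ Finset.Icc 1 m, a k * Real.sin (k * x)| ≤ K * (δ / (2 * K)) := h2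
        _ = δ / 2 := hKδ
        _ < δ := by linarith
    · have h2 := hmain n m hn h x
      calc |(∑ k ∈ Finset.Icc 1 m, a k * Real.sin (k * x))
              - ∑ k ∈ Finset.Icc 1 n, a k * Real.sin (k * x)| ≤ K * (δ / (2 * K)) := h2
        _ = δ / 2 := hKδ
        _ < δ := by linarith
  have hpt : ∀ x : ℝ, ∃ L : ℝ,
      Tendsto (fun j : ℕ => ∑ k ∈ Finset.Icc 1 j, a k * Real.sin (k * x)) atTop (nhds L) := by
    intro x
    apply cauchySeq_tendsto_of_complete
    rw [Metric.cauchySeq_iff]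
    intro δ hδ
    obtain ⟨N, hN⟩ := hcauchy δ hδ
    exact ⟨N, fun m hm n hn => hN m n hm hn x⟩
  choose f hf using hpt
  refine ⟨f, ?_⟩
  rw [← tendstoUniformlyOn_univ]
  apply UniformCauchySeqOn.tendstoUniformlyOn_of_tendsto
  · rw [Metric.uniformCauchySeqOn_iff]
    intro δ hδ
    obtain ⟨N, hN⟩ := hcauchy δ hδ
    exact ⟨N, fun m hm n hn x _ => hN m n hm hn x⟩
  · exact fun x _ => hf x
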